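/- Let d ≥ 2 and n ≥ 1 be integers and set δ := 1/(n+2), and let e := (1,…,1) ∈ ℝ^d. For every x ∈ S^{n+δ} with 0 ≤ x_d ≤ 1+δ, there exists a pair (v,π), with v ∈ ℤ^d admissible for n+1 and v_d = 0, such that either x ∈ k((1−δ)v, π) (type (a), used when π⁻¹(d) = d) or x ∈ k((1−δ)v + δe, π) with π⁻¹(d) < d (type (b)). -/

import Mathlib

/-- The right `d`-simplex `S^α = {x ∈ ℝ^d : α ≥ x_1 ≥ x_2 ≥ … ≥ x_d ≥ 0}`
(coordinates indexed by `Fin d`, in order). -/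
def Sset (d : ℕ) (α : ℝ) : Set (Fin d → ℝ) :=
  {x | (∀ i : Fin d, 0 ≤ x i ∧ x i ≤ α) ∧ ∀ i j : Fin d, i ≤ j → x j ≤ x i}

/-- The Kuhn simplex `k(v,π) = {x : 1 ≥ (x−v)_{π(1)} ≥ … ≥ (x−v)_{π(d)} ≥ 0}`. -/
def kuhn (d : ℕ) (v : Fin d → ℝ) (π : Equiv.Perm (Fin d)) : Set (Fin d → ℝ) :=
  {x | (∀ i : Fin d, 0 ≤ x (π i) - v (π i) ∧ x (π i) - v (π i) ≤ 1) ∧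
       ∀ i j : Fin d, i ≤ j → x (π j) - v (π j) ≤ x (π i) - v (π i)}

/-- `(v,π)` with `v ∈ ℤ^d` is admissible for `m` if `v ∈ S^{m-1}` and whenever
`v_j = v_{j+1}`, `j` precedes `j+1` in `π`, i.e. `π⁻¹(j) < π⁻¹(j+1)`. -/
def admissible (d m : ℕ) (v : Fin d → ℤ) (π : Equiv.Perm (Fin d)) : Prop :=
  ((fun i => (v i : ℝ)) ∈ Sset d ((m : ℝ) - 1)) ∧
  ∀ (j : Fin d) (h : (j : ℕ) + 1 < d),
    v j = v ⟨(j : ℕ) + 1, h⟩ → π.symm j < π.symm ⟨(j : ℕ) + 1, h⟩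

lemma sort_neg_stable {d : ℕ} (y : Fin d → ℝ) {j k : Fin d} (hjk : j < k) (hy : y k ≤ y j) :
    (Tuple.sort (fun i => -y i)).symm j < (Tuple.sort (fun i => -y i)).symm k := by
  set f : Fin d → ℝ := fun i => -y i with hf
  set π := Tuple.sort f with hπ
  have hmono : Monotone (f ∘ π) := Tuple.monotone_sort f
  have hstab : ∀ p q, p < q → f (π p) = f (π q) → π p < π q :=
    (Tuple.eq_sort_iff.mp hπ).2
  have hpj : π (π.symm j) = j := Equiv.apply_symm_apply _ _
  have hqk : π (π.symm k) = k := Equiv.apply_symm_apply _ _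
  rcases lt_trichotomy (π.symm j) (π.symm k) with h | h | h
  · exact h
  · exact absurd (by rw [← hpj, h, hqk]) (ne_of_lt hjk)
  · exfalso
    have h1 : (f ∘ π) (π.symm k) ≤ (f ∘ π) (π.symm j) := hmono h.le
    simp only [Function.comp_apply, hpj, hqk] at h1
    have heq : f (π (π.symm k)) = f (π (π.symm j)) := by
      rw [hpj, hqk]
      simp only [hf]
      have : y j = y k := by
        have h2 : y j ≤ y k := by simpa [hf] using h1
        exact le_antisymm h2 hy
      rw [this]
    have h2 := hstab _ _ h heq
    rw [hpj, hqk] at h2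
    exact absurd h2 (not_lt.mpr hjk.le)

lemma sort_neg_max {d : ℕ} (y : Fin d → ℝ) (k : Fin d)
    (hk : ∀ i, i ≠ k → y i < y k) :
    ((Tuple.sort (fun i => -y i)).symm k : ℕ) = 0 := by
  set f : Fin d → ℝ := fun i => -y i with hf
  set π := Tuple.sort f with hπ
  by_contra hne
  set z : Fin d := ⟨0, k.pos⟩ with hz
  have hpos : z < π.symm k := by
    rw [Fin.lt_def]
    exact Nat.pos_of_ne_zero hne
  have h1 : (f ∘ π) z ≤ (f ∘ π) (π.symm k) := Tuple.monotone_sort f hpos.le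
  simp only [Function.comp_apply, Equiv.apply_symm_apply] at h1
  have hne2 : π z ≠ k := by
    intro h
    apply hne
    rw [← h, Equiv.symm_apply_apply]
  have h3 := hk _ hne2
  simp only [hf] at h1
  linarith

/-- every `x` in the base `{x ∈ S^{n+δ} : 0 ≤ x_d ≤ 1+δ}` is covered by
a simplex of type (a), `k((1-δ)v, π)`, or of type (b), `k((1-δ)v + δe, π)` with
`π⁻¹(d) < d`, for some pair `(v,π)` admissible for `n+1` with `v_d = 0`. -/
theorem base_point_cover (d n : ℕ) (hd : 2 ≤ d) (hn : 1 ≤ n)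
    (δ : ℝ) (hδ : δ = ((n : ℝ) + 2)⁻¹)
    (x : Fin d → ℝ) (hx : x ∈ Sset d ((n : ℝ) + δ))
    (hxd0 : 0 ≤ x ⟨d - 1, by omega⟩) (hxd : x ⟨d - 1, by omega⟩ ≤ 1 + δ) :
    ∃ (v : Fin d → ℤ) (π : Equiv.Perm (Fin d)),
      admissible d (n + 1) v π ∧ v ⟨d - 1, by omega⟩ = 0 ∧
      (x ∈ kuhn d (fun i => (1 - δ) * (v i : ℝ)) π ∨
        (x ∈ kuhn d (fun i => (1 - δ) * (v i : ℝ) + δ) π ∧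
          π.symm ⟨d - 1, by omega⟩ < ⟨d - 1, by omega⟩)) := by
  obtain ⟨hxb, hxm⟩ := hx
  have hN1 : (1:ℝ) ≤ (n:ℝ) := by exact_mod_cast hn
  have hn2 : (0:ℝ) < (n:ℝ) + 2 := by linarith
  have hδe : δ * ((n:ℝ) + 2) = 1 := by rw [hδ]; field_simp
  have hδ0 : 0 < δ := by rw [hδ]; positivity
  have hδ1 : δ < 1 := by nlinarith
  have h1δ : 0 < 1 - δ := by linarith
  set last : Fin d := ⟨d - 1, by omega⟩ with hlastdef
  have hle_last : ∀ i : Fin d, i ≤ last := by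
    intro i
    have := i.isLt
    rw [Fin.le_def]
    simp only [hlastdef]
    omega
  have hxlast : ∀ i, x last ≤ x i := fun i => hxm i last (hle_last i)
  rcases le_or_gt (x last) 1 with hc | hc
  · -- type (a)
    set v : Fin d → ℤ := fun i => max 0 ⌈(x i - 1) / (1 - δ)⌉ with hv
    have hv0 : ∀ i, (0:ℤ) ≤ v i := fun i => le_max_left _ _
    have hvge : ∀ i, x i - 1 ≤ (1 - δ) * (v i : ℝ) := by
      intro i
      have h2 : (x i - 1) / (1 - δ) ≤ ((v i : ℤ) : ℝ) := by
        have h3 : ((⌈(x i - 1) / (1 - δ)⌉ : ℤ) : ℝ) ≤ ((v i : ℤ) : ℝ) := by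
          exact_mod_cast le_max_right 0 _
        linarith [Int.le_ceil ((x i - 1) / (1 - δ))]
      rw [div_le_iff₀ h1δ] at h2
      linarith
    have hvle' : ∀ i, (1 - δ) * (v i : ℝ) ≤ x i := by
      intro i
      rcases le_or_gt ⌈(x i - 1) / (1 - δ)⌉ 0 with h | h
      · have hv0' : v i = 0 := max_eq_left h
        rw [hv0']
        simpa using (hxb i).1
      · have hv0' : v i = ⌈(x i - 1) / (1 - δ)⌉ := max_eq_right h.le
        have h2 : ((v i : ℤ) : ℝ) < (x i - 1) / (1 - δ) + 1 := by
          rw [hv0']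
          exact_mod_cast Int.ceil_lt_add_one _
        have h5 : (1 - δ) * ((x i - 1) / (1 - δ) + 1) = x i - δ := by
          field_simp
          ring
        have h6 := mul_lt_mul_of_pos_left h2 h1δ
        linarith
    have hvn : ∀ i, (v i : ℝ) ≤ (n : ℝ) := by
      intro i
      have hceil : ⌈(x i - 1) / (1 - δ)⌉ ≤ (n : ℤ) := by
        apply Int.ceil_le.mpr
        push_cast
        rw [div_le_iff₀ h1δ]
        nlinarith [(hxb i).2]
      have : v i ≤ (n : ℤ) := max_le (by positivity) hceil
      exact_mod_cast this
    have hvmono : ∀ i j : Fin d, i ≤ j → v j ≤ v i := by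
      intro i j hij
      apply max_le_max le_rfl
      apply Int.ceil_mono
      gcongr
      linarith [hxm i j hij]
    have hvlast : v last = 0 := by
      apply max_eq_left
      apply Int.ceil_le.mpr
      push_cast
      rw [div_le_iff₀ h1δ]
      linarith
    have hy0 : ∀ i, 0 ≤ x i - (1 - δ) * (v i : ℝ) := fun i => by linarith [hvle' i]
    have hy1 : ∀ i, x i - (1 - δ) * (v i : ℝ) ≤ 1 := fun i => by linarith [hvge i]
    set π := Tuple.sort (fun i => -(x i - (1 - δ) * (v i : ℝ))) with hπ
    have hmono : Monotone ((fun i => -(x i - (1 - δ) * (v i : ℝ))) ∘ π) :=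
      Tuple.monotone_sort _
    have hSb : ∀ i : Fin d, (0:ℝ) ≤ (v i : ℝ) ∧ (v i : ℝ) ≤ (((n:ℕ)+1 : ℕ) : ℝ) - 1 := by
      intro i
      constructor
      · exact_mod_cast hv0 i
      · push_cast
        linarith [hvn i]
    refine ⟨v, π, ⟨⟨fun i => hSb i, fun i j hij => ?_⟩, ?_⟩, hvlast,
      Or.inl ⟨fun i => ⟨?_, ?_⟩, fun i j hij => ?_⟩⟩
    · show (v j : ℝ) ≤ (v i : ℝ)
      exact_mod_cast hvmono i j hij
    · intro j h hvj
      set j' : Fin d := ⟨(j : ℕ) + 1, h⟩ with hj'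
      have hjj' : j < j' := by simp [Fin.lt_def, hj']
      have hyy : x j' - (1 - δ) * (v j' : ℝ) ≤ x j - (1 - δ) * (v j : ℝ) := by
        rw [hvj]
        linarith [hxm j j' hjj'.le]
      exact sort_neg_stable (fun i => x i - (1 - δ) * (v i : ℝ)) hjj' hyy
    · show 0 ≤ x (π i) - (1 - δ) * (v (π i) : ℝ)
      exact hy0 (π i)
    · show x (π i) - (1 - δ) * (v (π i) : ℝ) ≤ 1
      exact hy1 (π i)
    · show x (π j) - (1 - δ) * (v (π j) : ℝ) ≤ x (π i) - (1 - δ) * (v (π i) : ℝ)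
      have := hmono hij
      simp only [Function.comp_apply] at this
      linarith
  · -- type (b)
    have hx1 : ∀ i, 1 < x i := fun i => lt_of_lt_of_le hc (hxlast i)
    set v : Fin d → ℤ := fun i => if i = last then 0 else ⌊(x i - δ) / (1 - δ)⌋ with hv
    have hvlast : v last = 0 := by simp [hv]
    have hv1 : ∀ i, i ≠ last → (1:ℤ) ≤ v i := by
      intro i hi
      simp only [hv, if_neg hi]
      apply Int.le_floor.mpr
      push_cast
      rw [le_div_iff₀ h1δ]
      linarith [hx1 i]
    have hv0 : ∀ i, (0:ℤ) ≤ v i := by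
      intro i
      by_cases hi : i = last
      · rw [hi, hvlast]
      · linarith [hv1 i hi]
    have hvn : ∀ i, (v i : ℝ) ≤ (n : ℝ) := by
      intro i
      by_cases hi : i = last
      · rw [hi, hvlast]; push_cast; linarith
      · simp only [hv, if_neg hi]
        have h2 : (x i - δ) / (1 - δ) < (n : ℝ) + 1 := by
          rw [div_lt_iff₀ h1δ]
          nlinarith [(hxb i).2]
        have h3 : ((⌊(x i - δ) / (1 - δ)⌋ : ℤ) : ℝ) < (n : ℝ) + 1 :=
          lt_of_le_of_lt (Int.floor_le _) h2
        have h4 : (⌊(x i - δ) / (1 - δ)⌋ : ℤ) < (n : ℤ) + 1 := by exact_mod_cast h3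
        have h5 : (⌊(x i - δ) / (1 - δ)⌋ : ℤ) ≤ (n : ℤ) := by omega
        exact_mod_cast h5
    have hvmono : ∀ i j : Fin d, i ≤ j → v j ≤ v i := by
      intro i j hij
      by_cases hj : j = last
      · rw [hj, hvlast]; exact hv0 i
      · have hi : i ≠ last := by
          intro h
          apply hj
          exact le_antisymm (hle_last j) (h ▸ hij)
        simp only [hv, if_neg hi, if_neg hj]
        apply Int.floor_mono
        gcongr
        linarith [hxm i j hij]
    have hylast1 : 1 - δ < x last - ((1 - δ) * (v last : ℝ) + δ) := by
      rw [hvlast]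
      push_cast
      linarith
    have hylast2 : x last - ((1 - δ) * (v last : ℝ) + δ) ≤ 1 := by
      rw [hvlast]
      push_cast
      linarith
    have hylt : ∀ i, i ≠ last →
        0 ≤ x i - ((1 - δ) * (v i : ℝ) + δ) ∧
        x i - ((1 - δ) * (v i : ℝ) + δ) < 1 - δ := by
      intro i hi
      have hvi : (v i : ℝ) = ((⌊(x i - δ) / (1 - δ)⌋ : ℤ) : ℝ) := by
        simp [hv, if_neg hi]
      have h2 : ((⌊(x i - δ) / (1 - δ)⌋ : ℤ) : ℝ) ≤ (x i - δ) / (1 - δ) := Int.floor_le _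
      have h2' : (x i - δ) / (1 - δ) < ((⌊(x i - δ) / (1 - δ)⌋ : ℤ) : ℝ) + 1 :=
        Int.lt_floor_add_one _
      have h4 : (1 - δ) * ((x i - δ) / (1 - δ)) = x i - δ := by field_simp
      have h3 := mul_le_mul_of_nonneg_left h2 h1δ.le
      have h3' := mul_lt_mul_of_pos_left h2' h1δ
      rw [hvi]
      constructor <;> linarith
    have hy0 : ∀ i, 0 ≤ x i - ((1 - δ) * (v i : ℝ) + δ) := by
      intro i
      by_cases hi : i = last
      · rw [hi]; linarith
      · exact (hylt i hi).1
    have hy1 : ∀ i, x i - ((1 - δ) * (v i : ℝ) + δ) ≤ 1 := by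
      intro i
      by_cases hi : i = last
      · rw [hi]; exact hylast2
      · linarith [(hylt i hi).2]
    set π := Tuple.sort (fun i => -(x i - ((1 - δ) * (v i : ℝ) + δ))) with hπ
    have hmono : Monotone ((fun i => -(x i - ((1 - δ) * (v i : ℝ) + δ))) ∘ π) :=
      Tuple.monotone_sort _
    have hsymm0 : ((π.symm last : Fin d) : ℕ) = 0 := by
      refine sort_neg_max (fun i => x i - ((1 - δ) * (v i : ℝ) + δ)) last ?_
      intro i hi
      linarith [(hylt i hi).2]
    have hSb : ∀ i : Fin d, (0:ℝ) ≤ (v i : ℝ) ∧ (v i : ℝ) ≤ (((n:ℕ)+1 : ℕ) : ℝ) - 1 := by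
      intro i
      constructor
      · exact_mod_cast hv0 i
      · push_cast
        linarith [hvn i]
    refine ⟨v, π, ⟨⟨fun i => hSb i, fun i j hij => ?_⟩, ?_⟩, hvlast,
      Or.inr ⟨⟨fun i => ⟨?_, ?_⟩, fun i j hij => ?_⟩, ?_⟩⟩
    · show (v j : ℝ) ≤ (v i : ℝ)
      exact_mod_cast hvmono i j hij
    · intro j h hvj
      set j' : Fin d := ⟨(j : ℕ) + 1, h⟩ with hj'
      have hjj' : j < j' := by simp [Fin.lt_def, hj']
      have hjne : j ≠ last := by
        intro hj
        have h2 : (j : ℕ) = d - 1 := by rw [hj]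
        omega
      by_cases hj'ne : j' = last
      · exfalso
        rw [hj'ne, hvlast] at hvj
        linarith [hv1 j hjne]
      · have hyy : x j' - ((1 - δ) * (v j' : ℝ) + δ) ≤ x j - ((1 - δ) * (v j : ℝ) + δ) := by
          rw [hvj]
          linarith [hxm j j' hjj'.le]
        exact sort_neg_stable (fun i => x i - ((1 - δ) * (v i : ℝ) + δ)) hjj' hyy
    · show 0 ≤ x (π i) - ((1 - δ) * (v (π i) : ℝ) + δ)
      exact hy0 (π i)
    · show x (π i) - ((1 - δ) * (v (π i) : ℝ) + δ) ≤ 1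
      exact hy1 (π i)
    · show x (π j) - ((1 - δ) * (v (π j) : ℝ) + δ) ≤ x (π i) - ((1 - δ) * (v (π i) : ℝ) + δ)
      have := hmono hij
      simp only [Function.comp_apply] at this
      linarith
    · rw [Fin.lt_def, hsymm0]
      simp only [hlastdef]
      omega
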